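/- Let k ≥ 1 and let G be a nontrivial connected graph. If X is a k-ftmv set of G, then X is contained in a single block of G (a maximal connected subgraph without cut-vertices). Consequently fμᵏ(G) = max over blocks B of G of fμᵏ(B). -/

import Mathlib

open SimpleGraph

variable {V : Type*}

/-- `X` is a `k`-fault-tolerant mutual-visibility set of `G`: for any two distinct
non-adjacent vertices `u v ∈ X` there are `k+1` internally disjoint shortest
`u,v`-paths whose only vertices in `X` are `u` and `v`. -/
def IsFtmvSet (G : SimpleGraph V) (k : ℕ) (X : Set V) : Prop :=
  ∀ u ∈ X, ∀ v ∈ X, u ≠ v → ¬ G.Adj u v →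
    ∃ P : Fin (k + 1) → G.Path u v,
      (∀ i, (P i).1.length = G.dist u v) ∧
      (∀ i, ∀ w ∈ (P i).1.support, w ∈ X → w = u ∨ w = v) ∧
      (∀ i j, i ≠ j → ∀ w, w ∈ (P i).1.support → w ∈ (P j).1.support → w = u ∨ w = v)

/-- The `k`-fault-tolerant mutual-visibility number: maximum cardinality of a `k`-ftmv set. -/
noncomputable def ftmvNum (G : SimpleGraph V) (k : ℕ) : ℕ :=
  sSup {n | ∃ X : Set V, IsFtmvSet G k X ∧ X.ncard = n}

/-- The clique number of `G`. -/
noncomputable def cliqueNum' (G : SimpleGraph V) : ℕ :=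
  sSup {n | ∃ s : Finset V, G.IsNClique n s}

/-- A graph has no cut-vertex: removing any vertex leaves a connected graph
(or the graph had only that one vertex). -/
def NoCutVtx {W : Type*} (H : SimpleGraph W) : Prop :=
  ∀ v : W, (H.induce {w : W | w ≠ v}).Connected ∨ ∀ w : W, w = v

/-- `B` is the vertex set of a block of `G`: a maximal set inducing a connected
subgraph without cut-vertices. -/
def IsBlockSet (G : SimpleGraph V) (B : Set V) : Prop :=
  B.Nonempty ∧ (G.induce B).Connected ∧ NoCutVtx (G.induce B) ∧
  ∀ B' : Set V, B ⊆ B' → (G.induce B').Connected → NoCutVtx (G.induce B') → B' = B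

variable {G : SimpleGraph V}

noncomputable local instance (priority := low) {α : Sort*} : DecidableEq α := Classical.decEq _

/-- u and v are joined by a walk staying inside S. -/
def LinkedIn (G : SimpleGraph V) (S : Set V) (u v : V) : Prop :=
  ∃ W : G.Walk u v, ∀ w ∈ W.support, w ∈ S

namespace LinkedIn

lemma refl {S : Set V} {u : V} (hu : u ∈ S) : LinkedIn G S u u :=
  ⟨Walk.nil, by simp [hu]⟩

lemma symm {S : Set V} {u v : V} (h : LinkedIn G S u v) : LinkedIn G S v u := by
  obtain ⟨W, hW⟩ := h
  exact ⟨W.reverse, by simpa using hW⟩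

lemma trans {S : Set V} {u v w : V} (h1 : LinkedIn G S u v) (h2 : LinkedIn G S v w) :
    LinkedIn G S u w := by
  obtain ⟨W1, hW1⟩ := h1; obtain ⟨W2, hW2⟩ := h2
  refine ⟨W1.append W2, fun x hx => ?_⟩
  rcases (Walk.mem_support_append_iff _ _).1 hx with h | h
  · exact hW1 x h
  · exact hW2 x h

lemma ofAdj {S : Set V} {u v : V} (h : G.Adj u v) (hu : u ∈ S) (hv : v ∈ S) :
    LinkedIn G S u v :=
  ⟨Walk.cons h Walk.nil, by simp [hu, hv]⟩

lemma mono {S T : Set V} (hST : S ⊆ T) {u v : V} (h : LinkedIn G S u v) : LinkedIn G T u v := by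
  obtain ⟨W, hW⟩ := h; exact ⟨W, fun w hw => hST (hW w hw)⟩

lemma mem_left {S : Set V} {u v : V} (h : LinkedIn G S u v) : u ∈ S := by
  obtain ⟨W, hW⟩ := h; exact hW u W.start_mem_support

lemma mem_right {S : Set V} {u v : V} (h : LinkedIn G S u v) : v ∈ S := by
  obtain ⟨W, hW⟩ := h; exact hW v W.end_mem_support

end LinkedIn

lemma exists_induce_walk {W : Type*} (H : SimpleGraph W) (T : Set W) {u v : W}
    (hu : u ∈ T) (hv : v ∈ T) (p : H.Walk u v) (hp : ∀ w ∈ p.support, w ∈ T) :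
    ∃ q : (H.induce T).Walk ⟨u, hu⟩ ⟨v, hv⟩,
      q.length = p.length ∧ q.support.map Subtype.val = p.support := by
  induction p with
  | nil => exact ⟨Walk.nil, by simp⟩
  | @cons a b c hab p ih =>
      have hb : b ∈ T := hp b (by simp)
      obtain ⟨q, hq1, hq2⟩ := ih hb hv (fun w hw => hp w (by simp [hw]))
      refine ⟨Walk.cons (by simpa using hab) q, by simp [hq1], by simp [hq2]⟩

lemma induce_walk_down {W : Type*} (H : SimpleGraph W) (T : Set W) {u' v' : T}
    (q : (H.induce T).Walk u' v') :
    ∃ p : H.Walk u' v', p.length = q.length ∧ p.support = q.support.map Subtype.val := by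
  refine ⟨q.map (Embedding.induce T).toHom, ?_, ?_⟩
  · exact Walk.length_map _ _
  · exact Walk.support_map _ _

lemma connected_induce_of_linked {W : Type*} (H : SimpleGraph W) (T : Set W) (hne : T.Nonempty)
    (h : ∀ u ∈ T, ∀ v ∈ T, ∃ p : H.Walk u v, ∀ w ∈ p.support, w ∈ T) :
    (H.induce T).Connected := by
  rw [connected_iff]
  refine ⟨fun u' v' => ?_, ⟨⟨hne.choose, hne.choose_spec⟩⟩⟩
  obtain ⟨p, hp⟩ := h u' u'.2 v' v'.2
  obtain ⟨q, -, -⟩ := exists_induce_walk H T u'.2 v'.2 p hp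
  exact ⟨q⟩

lemma linked_of_connected_induce {S : Set V} (hc : (G.induce S).Connected)
    {u v : V} (hu : u ∈ S) (hv : v ∈ S) : LinkedIn G S u v := by
  obtain ⟨q⟩ := hc ⟨u, hu⟩ ⟨v, hv⟩
  obtain ⟨p, -, hp⟩ := induce_walk_down G S q
  refine ⟨p, fun w hw => ?_⟩
  rw [hp] at hw
  obtain ⟨x, -, rfl⟩ := List.mem_map.1 hw
  exact x.2

lemma noCutVtx_of_linked {S : Set V}
    (h : ∀ c ∈ S, ∀ u ∈ S \ {c}, ∀ v ∈ S \ {c}, LinkedIn G (S \ {c}) u v) :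
    NoCutVtx (G.induce S) := by
  intro c₀
  by_cases hne : (S \ {(c₀ : V)}).Nonempty
  · left
    refine connected_induce_of_linked _ _
      ⟨⟨hne.choose, hne.choose_spec.1⟩, fun hEq =>
        hne.choose_spec.2 (congrArg Subtype.val hEq)⟩ ?_
    rintro u' hu' v' hv'
    have hu : (u' : V) ∈ S \ {(c₀ : V)} := ⟨u'.2, fun hEq => hu' (Subtype.ext hEq)⟩
    have hv : (v' : V) ∈ S \ {(c₀ : V)} := ⟨v'.2, fun hEq => hv' (Subtype.ext hEq)⟩
    obtain ⟨p, hp⟩ := h c₀ c₀.2 _ hu _ hv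
    obtain ⟨q, -, hq⟩ := exists_induce_walk G S u'.2 v'.2 p (fun w hw => (hp w hw).1)
    refine ⟨q, fun w hw hwc => ?_⟩
    have : (w : V) ∈ p.support := by
      rw [← hq]; exact List.mem_map_of_mem hw
    exact (hp _ this).2 (congrArg Subtype.val hwc)
  · right
    intro w
    apply Subtype.ext
    by_contra hne'
    exact hne ⟨w, w.2, hne'⟩

lemma linked_of_noCutVtx {S : Set V} (h : NoCutVtx (G.induce S)) {c : V} (hc : c ∈ S)
    {u v : V} (hu : u ∈ S \ {c}) (hv : v ∈ S \ {c}) : LinkedIn G (S \ {c}) u v := by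
  rcases h ⟨c, hc⟩ with hcon | hall
  · obtain ⟨q⟩ := hcon ⟨⟨u, hu.1⟩, fun hEq => hu.2 (congrArg Subtype.val hEq)⟩
      ⟨⟨v, hv.1⟩, fun hEq => hv.2 (congrArg Subtype.val hEq)⟩
    obtain ⟨p1, -, hp1⟩ := induce_walk_down (G.induce S) _ q
    obtain ⟨p, -, hp⟩ := induce_walk_down G S p1
    refine ⟨p, fun w hw => ?_⟩
    rw [hp] at hw
    obtain ⟨x, hx, rfl⟩ := List.mem_map.1 hw
    rw [hp1] at hx
    obtain ⟨y, -, rfl⟩ := List.mem_map.1 hx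
    exact ⟨y.1.2, fun hEq => y.2 (Subtype.ext hEq)⟩
  · exact absurd (congrArg Subtype.val (hall ⟨u, hu.1⟩)) hu.2

lemma takeUntil_dropUntil_inter {u v w x : V} {p : G.Walk u v} (hp : p.IsPath)
    (hw : w ∈ p.support) (h1 : x ∈ (p.takeUntil w hw).support)
    (h2 : x ∈ (p.dropUntil w hw).support) : x = w := by
  by_contra hx
  have hsp : p.support = (p.takeUntil w hw).support ++ (p.dropUntil w hw).support.tail := by
    conv_lhs => rw [← Walk.take_spec p hw]
    exact Walk.support_append _ _
  have hnd := hp.support_nodup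
  rw [hsp] at hnd
  have hdisj := List.disjoint_of_nodup_append hnd
  have h2' : x ∈ (p.dropUntil w hw).support.tail := by
    have := (p.dropUntil w hw).support_eq_cons
    rw [this] at h2
    rcases List.mem_cons.1 h2 with h | h
    · exact absurd h hx
    · exact h
  exact hdisj h1 h2'

lemma linked_to_end {u v w : V} {p : G.Walk u v} (hw : w ∈ p.support) :
    LinkedIn G {x | x ∈ p.support} w v :=
  ⟨p.dropUntil w hw, fun x hx => p.support_dropUntil_subset hw hx⟩

lemma linked_to_start {u v w : V} {p : G.Walk u v} (hw : w ∈ p.support) :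
    LinkedIn G {x | x ∈ p.support} w u :=
  (LinkedIn.symm ⟨p.takeUntil w hw, fun x hx => p.support_takeUntil_subset hw hx⟩)

lemma path_avoid {u v w c : V} {p : G.Walk u v} (hp : p.IsPath) (hw : w ∈ p.support)
    (hwc : w ≠ c) :
    ∃ z, (z = u ∨ z = v) ∧ z ≠ c ∧ LinkedIn G {x | x ∈ p.support ∧ x ≠ c} w z := by
  by_cases hcd : c ∈ (p.dropUntil w hw).support
  · -- c is on the second part; use the first part reversed, from w to u
    have hcu : c ∉ (p.takeUntil w hw).support := fun hct =>
      hwc.symm (takeUntil_dropUntil_inter hp hw hct hcd)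
    refine ⟨u, Or.inl rfl, fun hEq => hcu (hEq ▸ (p.takeUntil w hw).start_mem_support), ?_⟩
    refine LinkedIn.symm ⟨p.takeUntil w hw, fun x hx => ⟨p.support_takeUntil_subset hw hx, ?_⟩⟩
    exact fun hEq => hcu (hEq ▸ hx)
  · -- c is not on the second part; use it, from w to v
    refine ⟨v, Or.inr rfl, fun hEq => hcd (hEq ▸ (p.dropUntil w hw).end_mem_support), ?_⟩
    refine ⟨p.dropUntil w hw, fun x hx => ⟨p.support_dropUntil_subset hw hx, ?_⟩⟩
    exact fun hEq => hcd (hEq ▸ hx)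

/-- `S` induces a connected subgraph with no cut vertex. -/
def GoodSet (G : SimpleGraph V) (S : Set V) : Prop :=
  S.Nonempty ∧ (G.induce S).Connected ∧ NoCutVtx (G.induce S)

lemma goodSet_of_linked {S : Set V} (hne : S.Nonempty)
    (h1 : ∀ u ∈ S, ∀ v ∈ S, LinkedIn G S u v)
    (h2 : ∀ c ∈ S, ∀ u ∈ S \ {c}, ∀ v ∈ S \ {c}, LinkedIn G (S \ {c}) u v) :
    GoodSet G S := by
  refine ⟨hne, connected_induce_of_linked G S hne ?_, noCutVtx_of_linked h2⟩
  exact fun u hu v hv => h1 u hu v hv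

lemma goodSet_singleton (v : V) : GoodSet G {v} := by
  refine goodSet_of_linked ⟨v, rfl⟩ ?_ ?_
  · rintro u rfl w rfl
    exact LinkedIn.refl rfl
  · rintro c rfl u hu
    exact absurd hu.1 hu.2

lemma exists_blockSet_superset [Fintype V] {S : Set V} (h : GoodSet G S) :
    ∃ B : Set V, IsBlockSet G B ∧ S ⊆ B := by
  classical
  set T : Set (Set V) := {A | S ⊆ A ∧ GoodSet G A} with hT
  have hfin : T.Finite := Set.toFinite T
  obtain ⟨B, hBT, hBmax⟩ := Set.Finite.exists_maximalFor Set.ncard T hfin ⟨S, subset_rfl, h⟩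
  have key : ∀ B' : Set V, B ⊆ B' → (G.induce B').Connected → NoCutVtx (G.induce B') → B' = B := by
    intro B' hBB' hc hn
    have hB'T : B' ∈ T := ⟨hBT.1.trans hBB', hBT.2.1.mono hBB', hc, hn⟩
    have hle : B.ncard ≤ B'.ncard := Set.ncard_le_ncard hBB' B'.toFinite
    have := hBmax hB'T hle
    exact (Set.eq_of_subset_of_ncard_le hBB' this.ge B'.toFinite).symm
  exact ⟨B, ⟨hBT.2.1, hBT.2.2.1, hBT.2.2.2, key⟩, hBT.1⟩

noncomputable def ftmvPaths {k : ℕ} {X : Set V} (hX : IsFtmvSet G k X) {u v : V}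
    (hu : u ∈ X) (hv : v ∈ X) (hne : u ≠ v) (hna : ¬ G.Adj u v) :
    Fin (k + 1) → G.Path u v :=
  (hX u hu v hv hne hna).choose

lemma ftmvPaths_spec {k : ℕ} {X : Set V} (hX : IsFtmvSet G k X) {u v : V}
    (hu : u ∈ X) (hv : v ∈ X) (hne : u ≠ v) (hna : ¬ G.Adj u v) :
    (∀ i, ((ftmvPaths hX hu hv hne hna) i).1.length = G.dist u v) ∧
    (∀ i, ∀ w ∈ ((ftmvPaths hX hu hv hne hna) i).1.support, w ∈ X → w = u ∨ w = v) ∧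
    (∀ i j, i ≠ j → ∀ w, w ∈ ((ftmvPaths hX hu hv hne hna) i).1.support →
      w ∈ ((ftmvPaths hX hu hv hne hna) j).1.support → w = u ∨ w = v) :=
  (hX u hu v hv hne hna).choose_spec

lemma two_fin {k : ℕ} (hk : 1 ≤ k) : (⟨0, by omega⟩ : Fin (k+1)) ≠ ⟨1, by omega⟩ := by
  intro h
  simpa using congrArg Fin.val h

lemma ftmv_subset_block [Fintype V] [Nonempty V] {k : ℕ} (hk : 1 ≤ k) {X : Set V}
    (hX : IsFtmvSet G k X) :
    ∃ B : Set V, IsBlockSet G B ∧ X ⊆ B ∧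
      ∀ u ∈ X, ∀ v ∈ X, ∀ (hne : u ≠ v) (hna : ¬ G.Adj u v),
        ∃ P : Fin (k + 1) → G.Path u v,
          (∀ i, (P i).1.length = G.dist u v) ∧
          (∀ i, ∀ w ∈ (P i).1.support, w ∈ X → w = u ∨ w = v) ∧
          (∀ i j, i ≠ j → ∀ w, w ∈ (P i).1.support → w ∈ (P j).1.support → w = u ∨ w = v) ∧
          (∀ i, ∀ w ∈ (P i).1.support, w ∈ B) := by
  by_cases hXe : X.Nonempty
  swap
  · obtain ⟨B, hB, hsub⟩ := exists_blockSet_superset (goodSet_singleton (Classical.arbitrary V))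
      (G := G)
    rw [Set.not_nonempty_iff_eq_empty] at hXe
    exact ⟨B, hB, by simp [hXe], fun u hu => by simp [hXe] at hu⟩
  set S0 : Set V := X ∪ {w | ∃ (u : V) (hu : u ∈ X) (v : V) (hv : v ∈ X)
    (hne : u ≠ v) (hna : ¬ G.Adj u v) (i : Fin (k+1)),
    w ∈ ((ftmvPaths hX hu hv hne hna) i).1.support} with hS0
  have hXS : X ⊆ S0 := Set.subset_union_left
  have hsupS : ∀ {u v : V} (hu : u ∈ X) (hv : v ∈ X) (hne : u ≠ v) (hna : ¬ G.Adj u v)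
      (i : Fin (k+1)) (w : V), w ∈ ((ftmvPaths hX hu hv hne hna) i).1.support → w ∈ S0 :=
    fun hu hv hne hna i w hw => Or.inr ⟨_, hu, _, hv, hne, hna, i, hw⟩
  -- pair links
  have hPairLink : ∀ x ∈ X, ∀ y ∈ X, LinkedIn G S0 x y := by
    intro x hx y hy
    rcases eq_or_ne x y with rfl | hne
    · exact LinkedIn.refl (hXS hx)
    by_cases hadj : G.Adj x y
    · exact LinkedIn.ofAdj hadj (hXS hx) (hXS hy)
    · exact ⟨((ftmvPaths hX hx hy hne hadj) ⟨0, by omega⟩).1,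
        fun w hw => hsupS hx hy hne hadj _ w hw⟩
  have hPairLinkAvoid : ∀ c : V, ∀ x ∈ X \ {c}, ∀ y ∈ X \ {c},
      LinkedIn G (S0 \ {c}) x y := by
    intro c x hx y hy
    rcases eq_or_ne x y with rfl | hne
    · exact LinkedIn.refl ⟨hXS hx.1, hx.2⟩
    by_cases hadj : G.Adj x y
    · exact LinkedIn.ofAdj hadj ⟨hXS hx.1, hx.2⟩ ⟨hXS hy.1, hy.2⟩
    -- find a path avoiding c
    have : ∃ i : Fin (k+1), c ∉ ((ftmvPaths hX hx.1 hy.1 hne hadj) i).1.support := by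
      by_contra hno
      push_neg at hno
      have := (ftmvPaths_spec hX hx.1 hy.1 hne hadj).2.2 ⟨0, by omega⟩ ⟨1, by omega⟩
        (two_fin hk) c (hno _) (hno _)
      rcases this with rfl | rfl
      · exact hx.2 rfl
      · exact hy.2 rfl
    obtain ⟨i, hi⟩ := this
    exact ⟨((ftmvPaths hX hx.1 hy.1 hne hadj) i).1,
      fun w hw => ⟨hsupS hx.1 hy.1 hne hadj i w hw, fun hEq => hi (hEq ▸ hw)⟩⟩
  -- reach X
  have hReach : ∀ w ∈ S0, ∃ x ∈ X, LinkedIn G S0 w x := by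
    rintro w (hw | ⟨u, hu, v, hv, hne, hna, i, hw⟩)
    · exact ⟨w, hw, LinkedIn.refl (hXS hw)⟩
    · exact ⟨u, hu, (linked_to_start hw).mono (fun x hx => hsupS hu hv hne hna i x hx)⟩
  have hReachAvoid : ∀ c : V, ∀ w ∈ S0 \ {c}, ∃ x ∈ X \ {c}, LinkedIn G (S0 \ {c}) w x := by
    rintro c w ⟨hw | ⟨u, hu, v, hv, hne, hna, i, hw⟩, hwc⟩
    · exact ⟨w, ⟨hw, hwc⟩, LinkedIn.refl ⟨hXS hw, hwc⟩⟩
    · obtain ⟨z, hz, hzc, hlink⟩ := path_avoid ((ftmvPaths hX hu hv hne hna) i).2 hw hwc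
      refine ⟨z, ⟨?_, hzc⟩, hlink.mono ?_⟩
      · rcases hz with rfl | rfl
        · exact hu
        · exact hv
      · rintro x ⟨hx1, hx2⟩
        exact ⟨hsupS hu hv hne hna i x hx1, hx2⟩
  -- good set
  have hgood : GoodSet G S0 := by
    refine goodSet_of_linked ⟨hXe.choose, hXS hXe.choose_spec⟩ ?_ ?_
    · intro u hu v hv
      obtain ⟨x, hx, hux⟩ := hReach u hu
      obtain ⟨y, hy, hvy⟩ := hReach v hv
      exact (hux.trans (hPairLink x hx y hy)).trans hvy.symm
    · intro c _ u hu v hv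
      obtain ⟨x, hx, hux⟩ := hReachAvoid c u hu
      obtain ⟨y, hy, hvy⟩ := hReachAvoid c v hv
      exact (hux.trans (hPairLinkAvoid c x hx y hy)).trans hvy.symm
  obtain ⟨B, hB, hSB⟩ := exists_blockSet_superset hgood
  refine ⟨B, hB, fun x hx => hSB (hXS hx), ?_⟩
  intro u hu v hv hne hna
  refine ⟨ftmvPaths hX hu hv hne hna, (ftmvPaths_spec hX hu hv hne hna).1,
    (ftmvPaths_spec hX hu hv hne hna).2.1, (ftmvPaths_spec hX hu hv hne hna).2.2,
    fun i w hw => hSB (hsupS hu hv hne hna i w hw)⟩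

/-- Walking from outside `B` to inside `B`, there is an initial segment hitting `B`
only at its final vertex. -/
lemma exists_first_entry {B : Set V} : ∀ {c v : V} (p : G.Walk c v), c ∉ B → v ∈ B →
    ∃ b ∈ B, ∃ D : G.Walk c b, (∀ w ∈ D.support, w ∈ B → w = b) ∧
      D.support.Sublist p.support := by
  intro c v p
  induction p with
  | nil => intro hc hv; exact absurd hv hc
  | @cons a e v hae p ih =>
      intro hc hv
      by_cases he : e ∈ B
      · refine ⟨e, he, Walk.cons hae Walk.nil, ?_, ?_⟩
        · intro w hw hwB
          simp only [Walk.support_cons, Walk.support_nil, List.mem_cons,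
            List.mem_singleton, List.not_mem_nil, or_false] at hw
          rcases hw with h | h
          · subst h; exact absurd hwB hc
          · exact h
        · simp only [Walk.support_cons, Walk.support_nil]
          refine List.Sublist.cons₂ _ ?_
          exact List.singleton_sublist.2 p.start_mem_support
      · obtain ⟨b, hb, D, hD1, hD2⟩ := ih he hv
        refine ⟨b, hb, Walk.cons hae D, ?_, ?_⟩
        · intro w hw hwB
          simp only [Walk.support_cons, List.mem_cons] at hw
          rcases hw with h | h
          · subst h; exact absurd hwB hc
          · exact hD1 w h hwB
        · simp only [Walk.support_cons]
          exact hD2.cons₂ _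

lemma arms_avoid {B : Set V} {x a b c : V} {D1 : G.Walk x a} {D2 : G.Walk x b}
    (hD1 : D1.IsPath) (haB : a ∈ B) (hbB : b ∈ B)
    (hinter : ∀ w, w ∈ D1.support → w ∈ D2.support → w = x)
    {w : V} (hw : w ∈ D1.support) (hwc : w ≠ c) :
    ∃ z ∈ B, z ≠ c ∧
      LinkedIn G (({y | y ∈ D1.support} ∪ {y | y ∈ D2.support}) \ {c}) w z := by
  have hmono : {y | y ∈ D1.support ∧ y ≠ c} ⊆
      (({y | y ∈ D1.support} ∪ {y | y ∈ D2.support}) \ {c}) := by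
    rintro y ⟨hy1, hy2⟩
    exact ⟨Or.inl hy1, hy2⟩
  by_cases hc2 : c ∈ D2.support
  · by_cases hcx : c = x
    · subst hcx
      obtain ⟨z, hz, hzc, hlink⟩ := path_avoid hD1 hw hwc
      rcases hz with rfl | rfl
      · exact absurd rfl hzc
      · exact ⟨z, haB, hzc, hlink.mono hmono⟩
    · have hc1 : c ∉ D1.support := fun h => hcx (hinter c h hc2)
      refine ⟨a, haB, fun hEq => hc1 (hEq ▸ D1.end_mem_support), (linked_to_end hw).mono ?_⟩
      intro y hy
      exact ⟨Or.inl hy, fun hEq => hc1 (hEq ▸ hy)⟩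
  · obtain ⟨z, hz, hzc, hlink⟩ := path_avoid hD1 hw hwc
    rcases hz with rfl | rfl
    · refine ⟨b, hbB, fun hEq => hc2 (hEq ▸ D2.end_mem_support),
        (hlink.mono hmono).trans ⟨D2, fun y hy => ?_⟩⟩
      exact ⟨Or.inr hy, fun hEq => hc2 (hEq ▸ hy)⟩
    · exact ⟨z, haB, hzc, hlink.mono hmono⟩

lemma blockSet_isometric [Fintype V] {B : Set V} (hB : IsBlockSet G B) {u v : V}
    (hu : u ∈ B) (hv : v ∈ B) :
    ∃ p : G.Walk u v, p.length = G.dist u v ∧ ∀ w ∈ p.support, w ∈ B := by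
  obtain ⟨w0, hw0⟩ := linked_of_connected_induce hB.2.1 hu hv
  obtain ⟨p, hp, hlen⟩ := (Reachable.exists_path_of_dist ⟨w0⟩ : ∃ q : G.Walk u v, _)
  refine ⟨p, hlen, ?_⟩
  by_contra hcon
  push_neg at hcon
  obtain ⟨x, hxp, hxB⟩ := hcon
  set p1 := p.takeUntil x hxp with hp1
  set p2 := p.dropUntil x hxp with hp2
  have hp1path : p1.IsPath := hp.takeUntil hxp
  have hp2path : p2.IsPath := hp.dropUntil hxp
  obtain ⟨b, hbB, D2, hD2B, hD2sub⟩ := exists_first_entry p2 hxB hv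
  obtain ⟨a, haB, D1, hD1B, hD1sub⟩ := exists_first_entry p1.reverse hxB hu
  have hD1nd : D1.support.Nodup := hD1sub.nodup (by
    rw [Walk.support_reverse]
    exact List.nodup_reverse.2 hp1path.support_nodup)
  have hD2nd : D2.support.Nodup := hD2sub.nodup hp2path.support_nodup
  have hD1path : D1.IsPath := (Walk.isPath_def D1).2 hD1nd
  have hD2path : D2.IsPath := (Walk.isPath_def D2).2 hD2nd
  have hmem1 : ∀ w ∈ D1.support, w ∈ p1.support := by
    intro w hw
    have := hD1sub.subset hw
    rwa [Walk.support_reverse, List.mem_reverse] at this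
  have hmem2 : ∀ w ∈ D2.support, w ∈ p2.support := fun w hw => hD2sub.subset hw
  have hinter : ∀ w, w ∈ D1.support → w ∈ D2.support → w = x := fun w h1 h2 =>
    takeUntil_dropUntil_inter hp hxp (hmem1 w h1) (hmem2 w h2)
  have hinter' : ∀ w, w ∈ D2.support → w ∈ D1.support → w = x := fun w h1 h2 =>
    hinter w h2 h1
  set A : Set V := {y | y ∈ D1.support} ∪ {y | y ∈ D2.support} with hA
  set C : Set V := B ∪ A with hC
  have hBC : B ⊆ C := Set.subset_union_left
  have hAC : A ⊆ C := Set.subset_union_right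
  have hxC : x ∈ C := hAC (Or.inl D1.start_mem_support)
  -- plain links
  have hReach : ∀ w ∈ C, ∃ z ∈ B, LinkedIn G C w z := by
    rintro w (hw | hw | hw)
    · exact ⟨w, hw, LinkedIn.refl (hBC hw)⟩
    · exact ⟨a, haB, (linked_to_end hw).mono fun y hy => hAC (Or.inl hy)⟩
    · exact ⟨b, hbB, (linked_to_end hw).mono fun y hy => hAC (Or.inr hy)⟩
  have hgood : GoodSet G C := by
    refine goodSet_of_linked ⟨u, hBC hu⟩ ?_ ?_
    · intro s hs t ht
      obtain ⟨zs, hzs, hls⟩ := hReach s hs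
      obtain ⟨zt, hzt, hlt⟩ := hReach t ht
      exact (hls.trans (((linked_of_connected_induce hB.2.1 hzs hzt)).mono hBC)).trans hlt.symm
    · intro c _ s hs t ht
      -- reach B \ {c} from any point of C \ {c}
      have hstep : ∀ w ∈ C \ {c}, ∃ z ∈ B, z ≠ c ∧ LinkedIn G (C \ {c}) w z := by
        rintro w ⟨hw | hw | hw, hwc⟩
        · exact ⟨w, hw, hwc, LinkedIn.refl ⟨hBC hw, hwc⟩⟩
        · obtain ⟨z, hzB, hzc, hlink⟩ := arms_avoid hD1path haB hbB hinter hw hwc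
          exact ⟨z, hzB, hzc, hlink.mono fun y hy => Set.mem_diff_singleton.2 ⟨hAC hy.1, hy.2⟩⟩
        · obtain ⟨z, hzB, hzc, hlink⟩ := arms_avoid hD2path hbB haB hinter' hw hwc
          refine ⟨z, hzB, hzc, hlink.mono fun y hy => Set.mem_diff_singleton.2 ⟨hAC ?_, hy.2⟩⟩
          rcases hy.1 with h | h
          · exact Or.inr h
          · exact Or.inl h
      obtain ⟨zs, hzs, hzsc, hls⟩ := hstep s hs
      obtain ⟨zt, hzt, hztc, hlt⟩ := hstep t ht
      have hmid : LinkedIn G (C \ {c}) zs zt := by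
        by_cases hcB : c ∈ B
        · exact (linked_of_noCutVtx hB.2.2.1 hcB ⟨hzs, hzsc⟩ ⟨hzt, hztc⟩).mono
            fun y hy => Set.mem_diff_singleton.2 ⟨hBC hy.1, hy.2⟩
        · exact ((linked_of_connected_induce hB.2.1 hzs hzt)).mono
            fun y hy => Set.mem_diff_singleton.2 ⟨hBC hy, fun hEq => hcB (by rw [← hEq]; exact hy)⟩
      exact (hls.trans hmid).trans hlt.symm
  have := hB.2.2.2 C hBC hgood.2.1 hgood.2.2
  rw [← this] at hxB
  exact hxB hxC

lemma induce_dist_eq {S : Set V} {u' v' : S} (p : G.Walk (u' : V) (v' : V))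
    (hlen : p.length = G.dist (u' : V) (v' : V)) (hsupp : ∀ w ∈ p.support, w ∈ S) :
    (G.induce S).dist u' v' = G.dist (u' : V) (v' : V) := by
  obtain ⟨q, hq1, hq2⟩ := exists_induce_walk G S u'.2 v'.2 p hsupp
  have hq : (G.induce S).Walk u' v' := q
  have h1 : (G.induce S).dist u' v' ≤ G.dist (u' : V) (v' : V) := by
    rw [← hlen, ← hq1]
    exact SimpleGraph.dist_le q
  have h2 : G.dist (u' : V) (v' : V) ≤ (G.induce S).dist u' v' := by
    obtain ⟨q0, hq0⟩ := Reachable.exists_walk_length_eq_dist (⟨q⟩ : (G.induce S).Reachable u' v')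
    obtain ⟨p0, hp0, -⟩ := induce_walk_down G S q0
    rw [← hq0, ← hp0]
    exact SimpleGraph.dist_le p0
  omega

/-- Restricting an ftmv set (with all witnessing paths inside `B`) to `G.induce B`. -/
lemma ftmv_restrict {k : ℕ} {B X : Set V} (hXB : X ⊆ B)
    (h : ∀ u ∈ X, ∀ v ∈ X, ∀ (_ : u ≠ v) (_ : ¬ G.Adj u v),
      ∃ P : Fin (k + 1) → G.Path u v,
        (∀ i, (P i).1.length = G.dist u v) ∧
        (∀ i, ∀ w ∈ (P i).1.support, w ∈ X → w = u ∨ w = v) ∧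
        (∀ i j, i ≠ j → ∀ w, w ∈ (P i).1.support → w ∈ (P j).1.support → w = u ∨ w = v) ∧
        (∀ i, ∀ w ∈ (P i).1.support, w ∈ B)) :
    IsFtmvSet (G.induce B) k {x : B | (x : V) ∈ X} := by
  intro u' hu' v' hv' hne' hna'
  have hne : (u' : V) ≠ (v' : V) := fun hEq => hne' (Subtype.ext hEq)
  have hna : ¬ G.Adj (u' : V) (v' : V) := fun hadj => hna' (by simpa using hadj)
  obtain ⟨P, hPlen, hPX, hPdisj, hPB⟩ := h _ hu' _ hv' hne hna
  have hdd : (G.induce B).dist u' v' = G.dist (u' : V) (v' : V) :=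
    induce_dist_eq (P 0).1 (hPlen 0) (hPB 0)
  have key : ∀ i : Fin (k+1), ∃ q : (G.induce B).Walk u' v',
      q.length = (P i).1.length ∧ q.support.map Subtype.val = (P i).1.support := by
    intro i
    obtain ⟨q, hq1, hq2⟩ := exists_induce_walk G B u'.2 v'.2 (P i).1 (hPB i)
    exact ⟨q, hq1, hq2⟩
  choose q hqlen hqsupp using key
  have hqpath : ∀ i, (q i).IsPath := by
    intro i
    rw [Walk.isPath_def]
    have := (P i).2.support_nodup
    rw [← hqsupp i] at this
    exact this.of_map _
  have hmem : ∀ i (w : B), w ∈ (q i).support → (w : V) ∈ (P i).1.support := by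
    intro i w hw
    rw [← hqsupp i]
    exact List.mem_map_of_mem hw
  refine ⟨fun i => ⟨q i, hqpath i⟩, ?_, ?_, ?_⟩
  · intro i
    rw [hdd]
    rw [hqlen i]
    exact hPlen i
  · intro i w hw hwX
    rcases hPX i _ (hmem i w hw) hwX with h | h
    · exact Or.inl (Subtype.ext h)
    · exact Or.inr (Subtype.ext h)
  · intro i j hij w hwi hwj
    rcases hPdisj i j hij _ (hmem i w hwi) (hmem j w hwj) with h | h
    · exact Or.inl (Subtype.ext h)
    · exact Or.inr (Subtype.ext h)

/-- Extending an ftmv set of a block to the whole graph. -/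
lemma ftmv_extend [Fintype V] {k : ℕ} {B : Set V} (hB : IsBlockSet G B)
    {X' : Set B} (hX' : IsFtmvSet (G.induce B) k X') :
    IsFtmvSet G k (Subtype.val '' X') := by
  rintro u hu v hv hne hna
  obtain ⟨u', hu', rfl⟩ := hu
  obtain ⟨v', hv', rfl⟩ := hv
  have hne' : u' ≠ v' := fun hEq => hne (congrArg Subtype.val hEq)
  have hna' : ¬ (G.induce B).Adj u' v' := fun hadj => hna (by simpa using hadj)
  obtain ⟨P', hPlen, hPX, hPdisj⟩ := hX' u' hu' v' hv' hne' hna'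
  obtain ⟨p, hplen, hpsupp⟩ := blockSet_isometric hB u'.2 v'.2
  have hdd : (G.induce B).dist u' v' = G.dist (u' : V) (v' : V) :=
    induce_dist_eq p hplen hpsupp
  let emb := (SimpleGraph.Embedding.induce (G := G) B).toHom
  have hinj : Function.Injective ⇑emb := Subtype.val_injective
  refine ⟨fun i => ⟨Walk.map emb (P' i).1, Walk.map_isPath_of_injective hinj (P' i).2⟩, ?_, ?_, ?_⟩
  · intro i
    exact (Walk.length_map _ _).trans ((hPlen i).trans hdd)
  · intro i w hw hwX
    replace hw : w ∈ (P' i).1.support.map emb := Walk.support_map emb (P' i).1 ▸ hw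
    obtain ⟨w', hw', rfl⟩ := List.mem_map.1 hw
    obtain ⟨w'', hw'', hEq⟩ := hwX
    have hX'w : w' ∈ X' := by
      have h2 : w'' = w' := Subtype.ext hEq
      rwa [h2] at hw''
    rcases hPX i w' hw' hX'w with h | h
    · exact Or.inl (congrArg Subtype.val h)
    · exact Or.inr (congrArg Subtype.val h)
  · intro i j hij w hwi hwj
    replace hwi : w ∈ (P' i).1.support.map emb := Walk.support_map emb (P' i).1 ▸ hwi
    replace hwj : w ∈ (P' j).1.support.map emb := Walk.support_map emb (P' j).1 ▸ hwj
    obtain ⟨w1, hw1, rfl⟩ := List.mem_map.1 hwi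
    obtain ⟨w2, hw2, hEq⟩ := List.mem_map.1 hwj
    have hw2' : w1 ∈ (P' j).1.support := by
      have h2 : w2 = w1 := Subtype.ext hEq
      rwa [h2] at hw2
    rcases hPdisj i j hij w1 hw1 hw2' with h | h
    · exact Or.inl (congrArg Subtype.val h)
    · exact Or.inr (congrArg Subtype.val h)

lemma ftmv_empty (G : SimpleGraph V) (k : ℕ) : IsFtmvSet G k ∅ :=
  fun u hu => absurd hu (Set.notMem_empty u)

lemma ftmvNum_bddAbove [Fintype V] (G : SimpleGraph V) (k : ℕ) :
    BddAbove {n | ∃ X : Set V, IsFtmvSet G k X ∧ X.ncard = n} := by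
  refine ⟨Fintype.card V, ?_⟩
  rintro n ⟨X, -, rfl⟩
  calc X.ncard ≤ (Set.univ : Set V).ncard := Set.ncard_le_ncard (Set.subset_univ X)
    _ = Fintype.card V := by rw [Set.ncard_univ, Nat.card_eq_fintype_card]

lemma exists_max_ftmv [Fintype V] (G : SimpleGraph V) (k : ℕ) :
    ∃ X : Set V, IsFtmvSet G k X ∧ X.ncard = ftmvNum G k :=
  Nat.sSup_mem (s := {n | ∃ X : Set V, IsFtmvSet G k X ∧ X.ncard = n})
    ⟨0, ⟨∅, ftmv_empty G k, by simp⟩⟩ (ftmvNum_bddAbove G k)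

lemma le_ftmvNum [Fintype V] {G : SimpleGraph V} {k : ℕ} {X : Set V}
    (hX : IsFtmvSet G k X) : X.ncard ≤ ftmvNum G k :=
  le_csSup (ftmvNum_bddAbove G k) ⟨X, hX, rfl⟩

lemma ftmvNum_le_card [Fintype V] (G : SimpleGraph V) (k : ℕ) :
    ftmvNum G k ≤ Fintype.card V := by
  refine csSup_le ⟨0, ⟨∅, ftmv_empty G k, by simp⟩⟩ ?_
  rintro n ⟨X, -, rfl⟩
  calc X.ncard ≤ (Set.univ : Set V).ncard := Set.ncard_le_ncard (Set.subset_univ X)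
    _ = Fintype.card V := by rw [Set.ncard_univ, Nat.card_eq_fintype_card]

theorem stmt3 [Fintype V] [Nontrivial V] (G : SimpleGraph V) (hconn : G.Connected)
    (k : ℕ) (hk : 1 ≤ k) :
    (∀ X : Set V, IsFtmvSet G k X → ∃ B : Set V, IsBlockSet G B ∧ X ⊆ B) ∧
    ftmvNum G k = sSup {n | ∃ B : Set V, IsBlockSet G B ∧ n = ftmvNum (G.induce B) k} := by
  have hne : Nonempty V := inferInstance
  constructor
  · intro X hX
    obtain ⟨B, hB, hXB, -⟩ := ftmv_subset_block hk hX
    exact ⟨B, hB, hXB⟩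
  · have hRHSbdd : BddAbove {n | ∃ B : Set V, IsBlockSet G B ∧ n = ftmvNum (G.induce B) k} := by
      refine ⟨Fintype.card V, ?_⟩
      rintro n ⟨B, hB, rfl⟩
      haveI : Fintype B := Fintype.ofFinite _
      calc ftmvNum (G.induce B) k ≤ Fintype.card B := ftmvNum_le_card _ k
        _ ≤ Fintype.card V := Fintype.card_le_of_injective _ Subtype.val_injective
    refine le_antisymm ?_ ?_
    · -- take a maximum ftmv set, restrict to its block
      obtain ⟨X, hX, hXcard⟩ := exists_max_ftmv G k
      obtain ⟨B, hB, hXB, hstrong⟩ := ftmv_subset_block hk hX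
      haveI : Fintype B := Fintype.ofFinite _
      have hres : IsFtmvSet (G.induce B) k {x : B | (x : V) ∈ X} :=
        ftmv_restrict hXB hstrong
      have hcard : ({x : B | (x : V) ∈ X} : Set B).ncard = X.ncard := by
        have himg : Subtype.val '' ({x : B | (x : V) ∈ X} : Set B) = X := by
          ext y
          constructor
          · rintro ⟨x, hx, rfl⟩; exact hx
          · intro hy; exact ⟨⟨y, hXB hy⟩, hy, rfl⟩
        calc ({x : B | (x : V) ∈ X} : Set B).ncard
            = (Subtype.val '' ({x : B | (x : V) ∈ X} : Set B)).ncard :=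
              (Set.ncard_image_of_injective _ Subtype.val_injective).symm
          _ = X.ncard := by rw [himg]
      have h1 : ftmvNum G k ≤ ftmvNum (G.induce B) k := by
        rw [← hXcard, ← hcard]
        exact le_ftmvNum hres
      exact h1.trans (le_csSup hRHSbdd ⟨B, hB, rfl⟩)
    · -- every block's ftmv number is at most the global one
      have hBex : ∃ B : Set V, IsBlockSet G B := by
        obtain ⟨B, hB, -⟩ := ftmv_subset_block (G := G) hk (ftmv_empty G k)
        exact ⟨B, hB⟩
      refine csSup_le ⟨ftmvNum (G.induce hBex.choose) k, hBex.choose, hBex.choose_spec, rfl⟩ ?_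
      rintro n ⟨B, hB, rfl⟩
      haveI : Fintype B := Fintype.ofFinite _
      obtain ⟨X', hX', hX'card⟩ := exists_max_ftmv (G.induce B) k
      have hext : IsFtmvSet G k (Subtype.val '' X') := ftmv_extend hB hX'
      have : (Subtype.val '' X').ncard = X'.ncard :=
        Set.ncard_image_of_injective _ Subtype.val_injective
      rw [← hX'card, ← this]
      exact le_ftmvNum hext
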